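/- Let m ≥ 2, let r₁, …, r_m > 0 and v₁, …, v_m ∈ ℝ, and let Δ = { w ∈ ℝ^m : w_i ≥ 0 for all i and Σ_i w_i = 1 }. Let j₁, …, j_m be a permutation of {1, …, m} such that r_{j₁} v_{j₁} ≤ … ≤ r_{j_m} v_{j_m}, and for i ∈ {1, …, m−1} define t_i = ( Σ_{k=i+1}^m v_{j_k} − 1 ) / ( Σ_{k=i+1}^m 1/r_{j_k} ). Suppose k ∈ {1, …, m−1} satisfies r_{j_k} v_{j_k} ≤ t_k ≤ r_{j_{k+1}} v_{j_{k+1}}, and set t̃ = t_k and w_i = max(0, v_i − t̃/r_i) for i = 1, …, m. Then w = (w₁, …, w_m) lies in Δ and is the unique minimizer over Δ of the weighted quadratic u ↦ (1/2) Σ_{i=1}^m r_i (u_i − v_i)². -/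

import Mathlib

/-- Weighted projection onto the probability simplex: with weights `rᵢ > 0`, a
sorting permutation `j` of the values `rᵢvᵢ`, the threshold
`t = (Σ_{k+1..m} v_{j_k} − 1)/(Σ_{k+1..m} 1/r_{j_k})` (indices one-based)
pinned by `r_{j_k}v_{j_k} ≤ t ≤ r_{j_{k+1}}v_{j_{k+1}}`, the vector
`wᵢ = max(0, vᵢ − t/rᵢ)` is the unique minimizer over the simplex of
`u ↦ ½ Σᵢ rᵢ(uᵢ − vᵢ)²`. -/
theorem stmt_14 (m : ℕ) (hm : 2 ≤ m) (r v : Fin m → ℝ) (hr : ∀ i, 0 < r i)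
    (j : Equiv.Perm (Fin m))
    (hsorted : Monotone fun i => r (j i) * v (j i))
    (k : ℕ) (hk1 : 1 ≤ k) (hk2 : k ≤ m - 1)
    (t : ℝ)
    (ht : t = ((∑ i : Fin m, if k ≤ (i : ℕ) then v (j i) else 0) - 1)
            / (∑ i : Fin m, if k ≤ (i : ℕ) then 1 / r (j i) else 0))
    (hlo : r (j ⟨k - 1, by omega⟩) * v (j ⟨k - 1, by omega⟩) ≤ t)
    (hhi : t ≤ r (j ⟨k, by omega⟩) * v (j ⟨k, by omega⟩))
    (w : Fin m → ℝ) (hw : ∀ i, w i = max 0 (v i - t / r i)) :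
    w ∈ stdSimplex ℝ (Fin m) ∧
    (∀ u ∈ stdSimplex ℝ (Fin m),
      (1 / 2) * ∑ i, r i * (w i - v i) ^ 2 ≤ (1 / 2) * ∑ i, r i * (u i - v i) ^ 2) ∧
    (∀ u ∈ stdSimplex ℝ (Fin m),
      (1 / 2) * ∑ i, r i * (u i - v i) ^ 2 = (1 / 2) * ∑ i, r i * (w i - v i) ^ 2 →
      u = w) := by
  have hkm : k < m := by omega
  -- case descriptions of w
  have hwpos : ∀ i, t ≤ r i * v i → w i = v i - t / r i := by
    intro i hi
    rw [hw i, max_eq_right]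
    rw [sub_nonneg, div_le_iff₀ (hr i)]
    linarith [mul_comm (r i) (v i) ▸ hi]
  have hwzero : ∀ i, r i * v i ≤ t → w i = 0 := by
    intro i hi
    rw [hw i, max_eq_left]
    rw [sub_nonpos, le_div_iff₀ (hr i)]
    linarith [mul_comm (v i) (r i) ▸ hi]
  -- sum of w is 1
  have hSrpos : 0 < ∑ i : Fin m, if k ≤ (i : ℕ) then 1 / r (j i) else 0 := by
    apply Finset.sum_pos'
    · intro i _
      split
      · exact (one_div_pos.mpr (hr _)).le
      · exact le_rfl
    · refine ⟨⟨k, hkm⟩, Finset.mem_univ _, ?_⟩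
      have : k ≤ ((⟨k, hkm⟩ : Fin m) : ℕ) := le_rfl
      rw [if_pos this]
      exact one_div_pos.mpr (hr _)
  have hsum1 : ∑ i, w i = 1 := by
    have h1 : ∑ i, w i = ∑ i, w (j i) := (Equiv.sum_comp j w).symm
    have h2 : ∀ i : Fin m, w (j i) =
        (if k ≤ (i : ℕ) then v (j i) else 0)
          - t * (if k ≤ (i : ℕ) then 1 / r (j i) else 0) := by
      intro i
      by_cases hik : k ≤ (i : ℕ)
      · have hle : (⟨k, hkm⟩ : Fin m) ≤ i := by
          simpa [Fin.le_def] using hik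
        have := hhi.trans (hsorted hle)
        rw [hwpos _ this]
        simp [hik]
        ring
      · have hle : i ≤ (⟨k - 1, by omega⟩ : Fin m) := by
          simp [Fin.le_def]; omega
        have := (hsorted hle).trans hlo
        rw [hwzero _ this]
        simp [hik]
    rw [h1, Finset.sum_congr rfl fun i _ => h2 i, Finset.sum_sub_distrib,
      ← Finset.mul_sum, ht]
    field_simp
    ring
  have hwmem : w ∈ stdSimplex ℝ (Fin m) := by
    refine ⟨fun i => ?_, hsum1⟩
    rw [hw i]; exact le_max_left _ _
  -- key pointwise identity
  have key : ∀ i, r i * (w i - v i) = -min (r i * v i) t := by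
    intro i
    rcases le_total (r i * v i) t with h | h
    · rw [hwzero i h, min_eq_left h]; ring
    · rw [hwpos i h, min_eq_right h]
      have hne : r i ≠ 0 := (hr i).ne'
      field_simp
      ring
  -- gradient inequality
  have grad : ∀ u ∈ stdSimplex ℝ (Fin m),
      0 ≤ ∑ i, r i * (w i - v i) * (u i - w i) := by
    intro u hu
    have h1 : ∀ i, r i * (w i - v i) * (u i - w i)
        = (t - min (r i * v i) t) * (u i - w i) - t * (u i - w i) := by
      intro i
      rw [key i]; ring
    rw [Finset.sum_congr rfl fun i _ => h1 i, Finset.sum_sub_distrib,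
      ← Finset.mul_sum, Finset.sum_sub_distrib, hu.2, hsum1]
    simp only [sub_self, mul_zero, sub_zero]
    apply Finset.sum_nonneg
    intro i _
    rcases le_or_gt t (r i * v i) with h | h
    · rw [min_eq_right h]; simp
    · rw [min_eq_left h.le]
      have hz := hwzero i h.le
      have := hu.1 i
      nlinarith
  -- expansion identity
  have expand : ∀ u : Fin m → ℝ,
      (1 / 2) * ∑ i, r i * (u i - v i) ^ 2
        = (1 / 2) * ∑ i, r i * (u i - w i) ^ 2
          + (∑ i, r i * (w i - v i) * (u i - w i))
          + (1 / 2) * ∑ i, r i * (w i - v i) ^ 2 := by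
    intro u
    rw [Finset.mul_sum, Finset.mul_sum, Finset.mul_sum, ← Finset.sum_add_distrib,
      ← Finset.sum_add_distrib]
    exact Finset.sum_congr rfl fun i _ => by ring
  refine ⟨hwmem, fun u hu => ?_, fun u hu heq => ?_⟩
  · rw [expand u]
    have h1 : 0 ≤ ∑ i, r i * (u i - w i) ^ 2 :=
      Finset.sum_nonneg fun i _ => mul_nonneg (hr _).le (sq_nonneg _)
    have := grad u hu
    linarith
  · have h0 : (1 / 2) * ∑ i, r i * (u i - w i) ^ 2
        + (∑ i, r i * (w i - v i) * (u i - w i)) = 0 := by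
      have := expand u
      linarith [heq ▸ this]
    have h1 : 0 ≤ ∑ i, r i * (u i - w i) ^ 2 :=
      Finset.sum_nonneg fun i _ => mul_nonneg (hr _).le (sq_nonneg _)
    have h2 := grad u hu
    have h3 : ∑ i, r i * (u i - w i) ^ 2 = 0 := by linarith
    have h4 := (Finset.sum_eq_zero_iff_of_nonneg
      (fun i _ => mul_nonneg (hr _).le (sq_nonneg _) :
        ∀ i ∈ Finset.univ, (0:ℝ) ≤ r i * (u i - w i) ^ 2)).mp h3
    funext i
    have h5 := h4 i (Finset.mem_univ i)
    have hri : r i ≠ 0 := (hr i).ne'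
    have h6 : (u i - w i) ^ 2 = 0 := (mul_eq_zero.mp h5).resolve_left hri
    have h7 : u i - w i = 0 := by
      nlinarith [sq_nonneg (u i - w i)]
    linarith
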